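/- arXiv:1806.09441 — 6 statements merged into one kernel-verified Lean document; each statement's English description precedes it below -/
import Mathlib

section
/- The largest Fibonacci number that is a Cullen number is F_4 = 3; that is, if F_n = m·2^m + 1 for positive integers m, n, then F_n ≤ 3. -/
open Nat

lemma cancel2 (k : ℕ) (w : ℤ) (h : (2:ℤ) ^ k * 2 ∣ 2 ^ k * w) : (2:ℤ) ∣ w := by
  obtain ⟨c, hc⟩ := h
  exact ⟨c, mul_left_cancel₀ (pow_ne_zero k two_ne_zero)
    (show (2:ℤ) ^ k * w = 2 ^ k * (2 * c) by rw [hc]; ring)⟩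

/-- Invariant: fib(3·2^(i+1)) = 2^(i+3)·u, fib(3·2^(i+1)+1) = 2^(i+2)·v+1 with u,v odd. -/
lemma lemB : ∀ i : ℕ, ∃ u v : ℤ, Odd u ∧ Odd v ∧
    (Nat.fib (3 * 2 ^ (i + 1)) : ℤ) = 2 ^ (i + 3) * u ∧
    (Nat.fib (3 * 2 ^ (i + 1) + 1) : ℤ) = 2 ^ (i + 2) * v + 1 := by
  intro i
  induction i with
  | zero =>
    refine ⟨1, 3, ⟨0, by ring⟩, ⟨1, by ring⟩, ?_, ?_⟩
    · norm_num [show Nat.fib 6 = 8 from by decide]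
    · norm_num [show Nat.fib 7 = 13 from by decide]
  | succ i ih =>
    obtain ⟨u, v, hu, hv, hfe, hfo⟩ := ih
    have h2P : 3 * 2 ^ (i + 2) = 2 * (3 * 2 ^ (i + 1)) := by ring
    have hmono : Nat.fib (3 * 2 ^ (i + 1)) ≤ 2 * Nat.fib (3 * 2 ^ (i + 1) + 1) := by
      have := Nat.fib_mono (show 3 * 2 ^ (i + 1) ≤ 3 * 2 ^ (i + 1) + 1 by omega)
      omega
    have he : (Nat.fib (3 * 2 ^ (i + 2)) : ℤ) =
        (Nat.fib (3 * 2 ^ (i + 1)) : ℤ) *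
          (2 * Nat.fib (3 * 2 ^ (i + 1) + 1) - Nat.fib (3 * 2 ^ (i + 1))) := by
      rw [h2P, Nat.fib_two_mul]
      push_cast [hmono]
      ring
    have ho : (Nat.fib (3 * 2 ^ (i + 2) + 1) : ℤ) =
        (Nat.fib (3 * 2 ^ (i + 1) + 1) : ℤ) ^ 2 + (Nat.fib (3 * 2 ^ (i + 1)) : ℤ) ^ 2 := by
      rw [h2P, Nat.fib_two_mul_add_one]
      push_cast
      ring
    refine ⟨u * (2 ^ (i + 2) * (v - u) + 1),
      v + 2 ^ (i + 1) * v ^ 2 + 2 ^ (i + 3) * u ^ 2, ?_, ?_, ?_, ?_⟩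
    · exact hu.mul ⟨2 ^ (i + 1) * (v - u), by ring⟩
    · obtain ⟨a, ha⟩ := hv
      exact ⟨a + 2 ^ i * v ^ 2 + 2 ^ (i + 2) * u ^ 2, by rw [ha]; ring⟩
    · rw [he, hfe, hfo]; ring
    · rw [ho, hfe, hfo]; ring

/-- If fib n ≡ 1 mod 2^(j+3) and n < 3·2^(j+2), then n ∈ {1, 2, 3·2^(j+2)-1}. -/
lemma lemC : ∀ j n : ℕ, n < 3 * 2 ^ (j + 2) →
    ((2 : ℤ) ^ (j + 3) ∣ (Nat.fib n : ℤ) - 1) →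
    n = 1 ∨ n = 2 ∨ n = 3 * 2 ^ (j + 2) - 1 := by
  intro j
  induction j with
  | zero =>
    intro n hn h
    norm_num at hn
    interval_cases n <;> revert h <;> decide
  | succ j ih =>
    intro n hn h
    obtain ⟨u, v, hu, hv, hfe, hfo⟩ := lemB (j + 1)
    have hfe' : (Nat.fib (3 * 2 ^ (j + 2)) : ℤ) = 2 ^ (j + 4) * u := hfe
    have hfo' : (Nat.fib (3 * 2 ^ (j + 2) + 1) : ℤ) = 2 ^ (j + 3) * v + 1 := hfo
    have hpow : 3 * 2 ^ (j + 1 + 2) = 2 * (3 * 2 ^ (j + 2)) := by ring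
    have hsplit4 : (2:ℤ) ^ (j + 1 + 3) = 2 ^ (j + 3) * 2 := by ring
    rw [hsplit4] at h
    rcases lt_or_ge n (3 * 2 ^ (j + 2)) with hc | hc
    · -- n < P : use IH with the weaker congruence
      have h' : (2 : ℤ) ^ (j + 3) ∣ (Nat.fib n : ℤ) - 1 :=
        dvd_trans ⟨2, rfl⟩ h
      rcases ih n hc h' with h1 | h2 | h3
      · exact Or.inl h1
      · exact Or.inr (Or.inl h2)
      · -- n = P - 1 : contradiction mod 2^(j+4)
        exfalso
        have hsplit : Nat.fib (3 * 2 ^ (j + 2) - 1) + Nat.fib (3 * 2 ^ (j + 2)) =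
            Nat.fib (3 * 2 ^ (j + 2) + 1) := by
          have hP1 : (1:ℕ) ≤ 3 * 2 ^ (j + 2) := by omega
          have := @Nat.fib_add_two (3 * 2 ^ (j + 2) - 1)
          rw [show 3 * 2 ^ (j + 2) - 1 + 2 = 3 * 2 ^ (j + 2) + 1 by omega,
            show 3 * 2 ^ (j + 2) - 1 + 1 = 3 * 2 ^ (j + 2) by omega] at this
          omega
        have hval : (Nat.fib (3 * 2 ^ (j + 2) - 1) : ℤ) =
            2 ^ (j + 3) * (v - 2 * u) + 1 := by
          have hc2 : (Nat.fib (3 * 2 ^ (j + 2) - 1) : ℤ) =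
              (Nat.fib (3 * 2 ^ (j + 2) + 1) : ℤ) - Nat.fib (3 * 2 ^ (j + 2)) := by
            push_cast [← hsplit]; ring
          rw [hc2, hfe', hfo']; ring
        rw [h3, hval] at h
        have h2 : (2 : ℤ) ∣ (v - 2 * u) :=
          cancel2 (j + 3) _ (by simpa using h)
        obtain ⟨a, ha⟩ := hv
        omega
    · -- P ≤ n < 2P
      rcases Nat.eq_or_lt_of_le hc with hc1 | hc2
      · exfalso
        rw [← hc1, hfe'] at h
        obtain ⟨c, hcc⟩ := h
        have hone : (2:ℤ) ^ (j + 3) * 2 ∣ 1 :=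
          ⟨u - c, by linear_combination -hcc⟩
        have hle := Int.le_of_dvd one_pos hone
        have hp : (0:ℤ) < 2 ^ (j + 3) := by positivity
        linarith
      · obtain ⟨s, hs⟩ : ∃ s, n = 3 * 2 ^ (j + 2) + s + 1 := ⟨n - 3 * 2 ^ (j + 2) - 1, by omega⟩
        have hslt : s + 1 < 3 * 2 ^ (j + 2) := by
          rw [hpow] at hn; omega
        have hadd : (Nat.fib n : ℤ) =
            (Nat.fib (3 * 2 ^ (j + 2)) : ℤ) * Nat.fib s +
            (Nat.fib (3 * 2 ^ (j + 2) + 1) : ℤ) * Nat.fib (s + 1) := by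
          rw [hs, Nat.fib_add]; push_cast; ring
        have hcong : (2 : ℤ) ^ (j + 3) ∣ (Nat.fib (s + 1) : ℤ) - 1 := by
          have key : ((Nat.fib n : ℤ) - 1) -
              2 ^ (j + 3) * (2 * u * Nat.fib s + v * Nat.fib (s + 1)) =
              (Nat.fib (s + 1) : ℤ) - 1 := by
            rw [hadd, hfe', hfo']; ring
          have hd : (2 : ℤ) ^ (j + 3) ∣ ((Nat.fib n : ℤ) - 1) -
              2 ^ (j + 3) * (2 * u * Nat.fib s + v * Nat.fib (s + 1)) :=
            dvd_sub (dvd_trans ⟨2, rfl⟩ h) ⟨_, rfl⟩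
          rwa [key] at hd
        rcases ih (s + 1) hslt hcong with h1 | h2 | h3
        · exfalso
          have hs0 : s = 0 := by omega
          have hx : (Nat.fib n : ℤ) - 1 = 2 ^ (j + 3) * v := by
            rw [hadd, hs0, hfe', hfo']
            norm_num [show Nat.fib 0 = 0 from rfl, show Nat.fib 1 = 1 from rfl]
          rw [hx] at h
          obtain ⟨a, ha⟩ := hv
          have := cancel2 (j + 3) v h
          omega
        · exfalso
          have hs1 : s = 1 := by omega
          have hx : (Nat.fib n : ℤ) - 1 = 2 ^ (j + 3) * (2 * u + v) := by
            rw [hadd, hs1, hfe', hfo']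
            norm_num [show Nat.fib 1 = 1 from rfl, show Nat.fib 2 = 1 from by decide]
            ring
          rw [hx] at h
          obtain ⟨a, ha⟩ := hv
          have := cancel2 (j + 3) _ h
          omega
        · right; right
          rw [hs, hpow]
          have hP1 : (1:ℕ) ≤ 3 * 2 ^ (j + 2) := by omega
          omega

lemma fib_ge : ∀ k : ℕ, 2 ^ k ≤ Nat.fib (2 * k + 2) := by
  intro k
  induction k with
  | zero => decide
  | succ k ih =>
    have h1 : Nat.fib (2 * k + 2) ≤ Nat.fib (2 * k + 3) := Nat.fib_mono (by omega)
    have h2 : Nat.fib (2 * k + 4) = Nat.fib (2 * k + 2) + Nat.fib (2 * k + 3) :=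
      Nat.fib_add_two
    have h3 : 2 * (k + 1) + 2 = 2 * k + 4 := by ring
    rw [h3]
    omega

lemma twopow_lin : ∀ i : ℕ, 2 * (i + 4) ≤ 2 ^ (i + 3) := by
  intro i
  induction i with
  | zero => decide
  | succ i ih =>
    have hg : i + 1 + 3 = i + 4 := by omega
    rw [hg]
    have : (2:ℕ) ^ (i + 4) = 2 * 2 ^ (i + 3) := by ring
    omega

lemma twopow_add : ∀ i : ℕ, i + 4 + 2 ≤ 2 ^ (i + 4) := by
  intro i
  induction i with
  | zero => decide
  | succ i ih =>
    have hg : i + 1 + 4 = i + 5 := by omega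
    rw [hg]
    have : (2:ℕ) ^ (i + 5) = 2 * 2 ^ (i + 4) := by ring
    omega

lemma no_mid (c : ℕ) (a b : ℕ) (hab : a + 1 = b) (hlow : Nat.fib a < c)
    (hhigh : c < Nat.fib b) : ∀ n, Nat.fib n ≠ c := by
  intro n hn
  rcases le_or_gt n a with h | h
  · have := Nat.fib_mono h
    omega
  · have := Nat.fib_mono (show b ≤ n by omega)
    omega

theorem stmt_2 (m n : ℕ) (hm : 1 ≤ m) (hn : 1 ≤ n)
    (h : Nat.fib n = m * 2 ^ m + 1) :
    Nat.fib n ≤ 3 := by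
  rcases lt_or_ge m 4 with hm4 | hm4
  · interval_cases m
    · rw [h]; norm_num
    · exact absurd h (no_mid 9 6 7 rfl (by decide) (by decide) n)
    · exact absurd h (no_mid 25 8 9 rfl (by decide) (by decide) n)
  · exfalso
    -- m ≥ 4; set j := m - 3
    obtain ⟨j, rfl⟩ : ∃ j, m = j + 3 := ⟨m - 3, by omega⟩
    set m := j + 3 with hmj
    have hdvd : (2 : ℤ) ^ (j + 3) ∣ (Nat.fib n : ℤ) - 1 := by
      refine ⟨m, ?_⟩
      push_cast [h]
      ring
    have hpow2 : (2:ℕ) ^ m = 2 * 2 ^ (j + 2) := by rw [hmj]; ring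
    have h4p : 4 ≤ 2 ^ (j + 2) := by
      calc (4:ℕ) = 2 ^ 2 := rfl
        _ ≤ 2 ^ (j + 2) := Nat.pow_le_pow_right (by norm_num) (by omega)
    have hnge : 2 * 2 ^ (j + 2) + 2 ≤ n := by
      have hfibsmall : m * 2 ^ m ≠ 0 := by
        have := (Nat.pow_pos (show 0 < 2 by norm_num) : 0 < 2 ^ m)
        have hmpos : 0 < m := by omega
        positivity
      rcases lt_or_ge n (3 * 2 ^ (j + 2)) with hc | hc
      · rcases lemC j n hc hdvd with h1 | h2 | h3
        · rw [h1, show Nat.fib 1 = 1 from rfl] at h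
          omega
        · rw [h2, show Nat.fib 2 = 1 from rfl] at h
          omega
        · omega
      · omega
    -- growth contradiction
    have hk : 2 ^ (2 ^ (j + 2)) ≤ Nat.fib (2 * 2 ^ (j + 2) + 2) := fib_ge (2 ^ (j + 2))
    have hmono : Nat.fib (2 * 2 ^ (j + 2) + 2) ≤ Nat.fib n := Nat.fib_mono hnge
    have hlin : 2 * m ≤ 2 ^ (j + 2) := by
      have := twopow_lin (j - 1)
      have hj1 : 1 ≤ j := by omega
      rw [show j - 1 + 4 = m - 2 + 2 by omega, show j - 1 + 3 = j + 2 by omega] at this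
      omega
    have h2m : (2:ℕ) ^ (2 * m) ≤ 2 ^ (2 ^ (j + 2)) :=
      Nat.pow_le_pow_right (by norm_num) hlin
    have hmm : (m + 2) * 2 ^ m ≤ 2 ^ (2 * m) := by
      have h1 : m + 2 ≤ 2 ^ m := by
        have := twopow_add (j - 1)
        rw [show j - 1 + 4 = m - 1 + 1 by omega] at this
        have hmeq : m - 1 + 1 = m := by omega
        rw [hmeq] at this
        omega
      calc (m + 2) * 2 ^ m ≤ 2 ^ m * 2 ^ m := Nat.mul_le_mul_right _ h1
        _ = 2 ^ (2 * m) := by rw [← pow_add]; ring_nf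
    have hsmall : Nat.fib n < (m + 2) * 2 ^ m := by
      rw [h]
      have hp : 2 ≤ 2 ^ m := by
        have := Nat.one_lt_two_pow_iff.mpr (show m ≠ 0 by omega)
        omega
      nlinarith
    omega
end

section
/- For all integers k ≥ 2, the polynomial ψ_k(x) = x^k − x^{k−1} − ⋯ − x − 1 has exactly one real root α in the interval (2(1 − 2^{−k}), 2). -/
lemma aux_two_mul_lt_pow : ∀ k : ℕ, 3 ≤ k → 2 * k < 2 ^ k := by
  intro k hk
  induction k with
  | zero => omega
  | succ n ih =>
    rcases Nat.lt_or_ge n 3 with h | h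
    · interval_cases n <;> omega
    · have := ih (by omega)
      have h2 : 2 ≤ 2 ^ n := Nat.one_lt_two_pow (by omega)
      calc 2 * (n + 1) = 2 * n + 2 := by ring
        _ < 2 ^ n + 2 ^ n := by omega
        _ = 2 ^ (n + 1) := by ring

theorem stmt_4 (k : ℕ) (hk : 2 ≤ k) :
    ∃! α : ℝ, α ∈ Set.Ioo (2 * (1 - 2 ^ (-(k : ℤ)))) 2 ∧
      α ^ k - ∑ i ∈ Finset.range k, α ^ i = 0 := by
  have h2k : (2:ℝ) ^ (-(k:ℤ)) = ((2:ℝ)^k)⁻¹ := by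
    rw [zpow_neg, zpow_natCast]
  set a : ℝ := 2 * (1 - 2 ^ (-(k : ℤ))) with ha
  have hpow_pos : (0:ℝ) < 2^k := by positivity
  have hk4 : (4:ℝ) ≤ 2^k := by
    calc (4:ℝ) = 2^2 := by norm_num
    _ ≤ 2^k := by exact pow_le_pow_right₀ (by norm_num) hk
  have hinv : ((2:ℝ)^k)⁻¹ ≤ 4⁻¹ := by
    apply inv_anti₀ (by norm_num) hk4
  have hinv_pos : (0:ℝ) < ((2:ℝ)^k)⁻¹ := by positivity
  have ha1 : 1 < a := by rw [ha, h2k]; linarith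
  have ha2 : a < 2 := by rw [ha, h2k]; linarith
  set g : ℝ → ℝ := fun x => x^(k+1) - 2*x^k + 1 with hg
  -- equivalence of the two equations on x > 1
  have hkey : ∀ x : ℝ, (x ^ k - ∑ i ∈ Finset.range k, x ^ i) * (x - 1) = g x := by
    intro x
    have hgs := geom_sum_mul x k
    simp only [hg]
    linear_combination (-1 : ℝ) * hgs
  have hequiv : ∀ x : ℝ, 1 < x → ((x ^ k - ∑ i ∈ Finset.range k, x ^ i = 0) ↔ g x = 0) := by
    intro x hx
    have hx1 : x - 1 ≠ 0 := by intro h; nlinarith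
    rw [← hkey x, mul_eq_zero]
    constructor
    · intro h; left; exact h
    · rintro (h | h)
      · exact h
      · exact absurd h hx1
  -- g a < 0
  have hkR : (2:ℝ) * k < 2 ^ k ∨ k = 2 := by
    rcases Nat.lt_or_ge k 3 with h | h
    · right; omega
    · left
      have := aux_two_mul_lt_pow k h
      exact_mod_cast this
  have hber : ((2:ℝ)^k)⁻¹ * a ^ k > 1/2 := by
    have hak : a ^ k = 2^k * (1 - ((2:ℝ)^k)⁻¹)^k := by
      rw [ha, h2k, mul_pow]
    rw [hak, ← mul_assoc, inv_mul_cancel₀ (ne_of_gt hpow_pos), one_mul]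
    rcases hkR with h | h
    · have hb' : (1:ℝ) - k*((2:ℝ)^k)⁻¹ ≤ (1 - ((2:ℝ)^k)⁻¹)^k := by
        have hb := one_add_mul_le_pow (a := -((2:ℝ)^k)⁻¹) (by nlinarith) k
        calc (1:ℝ) - k*((2:ℝ)^k)⁻¹ = 1 + k * -((2:ℝ)^k)⁻¹ := by ring
          _ ≤ (1 + -((2:ℝ)^k)⁻¹)^k := hb
          _ = (1 - ((2:ℝ)^k)⁻¹)^k := by ring_nf
      have hklt : (k:ℝ) * ((2:ℝ)^k)⁻¹ < 1/2 := by
        have h1 := mul_lt_mul_of_pos_right h hinv_pos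
        rw [mul_inv_cancel₀ (ne_of_gt hpow_pos)] at h1
        linarith
      linarith
    · subst h
      norm_num
  have hga : g a < 0 := by
    have hgaq : g a = 1 - 2 * (((2:ℝ)^k)⁻¹ * a ^ k) := by
      have h2 : a = 2 - 2 * ((2:ℝ)^k)⁻¹ := by rw [ha, h2k]; ring
      simp only [hg]
      linear_combination (a^k) * h2
    rw [hgaq]; linarith
  have hg2 : g 2 = 1 := by
    rw [hg]; simp only; ring
  -- strict mono
  have hderiv : ∀ x : ℝ, HasDerivAt g ((k+1) * x^k - 2*(k * x^(k-1))) x := by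
    intro x
    have h1 : HasDerivAt (fun x : ℝ => x^(k+1)) ((k+1) * x^k) x := by
      simpa using hasDerivAt_pow (k+1) x
    have h2 : HasDerivAt (fun x : ℝ => 2 * x^k) (2 * (k * x^(k-1))) x :=
      (hasDerivAt_pow k x).const_mul 2
    simpa [hg] using (h1.sub h2).add_const 1
  have hcont : Continuous g := by
    rw [hg]; continuity
  have hmono : StrictMonoOn g (Set.Icc a 2) := by
    apply strictMonoOn_of_deriv_pos (convex_Icc a 2) hcont.continuousOn
    intro x hx
    rw [interior_Icc] at hx
    rw [(hderiv x).deriv]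
    have hx1 : 1 < x := lt_trans ha1 hx.1
    have hxpos : 0 < x := by linarith
    have hkaN : k + 1 ≤ 2^k := Nat.lt_two_pow_self
    have hka : (k:ℝ) + 1 ≤ 2^k := by exact_mod_cast hkaN
    have hxk : x^k = x^(k-1) * x := by
      rw [← pow_succ]; congr 1; omega
    have hpos1 : 0 < x^(k-1) := pow_pos hxpos _
    have hainq : 2*(k:ℝ) ≤ (k+1)*a := by
      have h2 : a = 2 - 2 * ((2:ℝ)^k)⁻¹ := by rw [ha, h2k]; ring
      have h3 : ((k:ℝ)+1) * ((2:ℝ)^k)⁻¹ ≤ 2^k * ((2:ℝ)^k)⁻¹ :=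
        mul_le_mul_of_nonneg_right hka (le_of_lt hinv_pos)
      rw [mul_inv_cancel₀ (ne_of_gt hpow_pos)] at h3
      rw [h2]; nlinarith
    have hxa : ((k:ℝ)+1) * a < ((k:ℝ)+1) * x := by
      apply mul_lt_mul_of_pos_left hx.1
      positivity
    rw [hxk]
    nlinarith [hpos1, hxa, hainq]
  -- existence via IVT
  have hivt : ∃ α ∈ Set.Ioo a 2, g α = 0 := by
    have hsub := intermediate_value_Ioo (le_of_lt ha2) hcont.continuousOn
    have h0 : (0:ℝ) ∈ Set.Ioo (g a) (g 2) := by rw [hg2]; exact ⟨hga, one_pos⟩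
    obtain ⟨α, hα, hgα⟩ := hsub h0
    exact ⟨α, hα, hgα⟩
  obtain ⟨α, hαmem, hgα⟩ := hivt
  refine ⟨α, ⟨hαmem, (hequiv α (lt_trans ha1 hαmem.1)).mpr hgα⟩, ?_⟩
  rintro β ⟨hβmem, hβeq⟩
  have hgβ := (hequiv β (lt_trans ha1 hβmem.1)).mp hβeq
  exact hmono.injOn (Set.Ioo_subset_Icc_self hβmem) (Set.Ioo_subset_Icc_self hαmem)
    (by rw [hgβ, hgα])
end

section
/- For all integers k ≥ 2 and n ≥ 1, α^{n−2} ≤ F_n^{(k)} ≤ α^{n−1}, where α is the unique root of x^k − x^{k−1} − ⋯ − x − 1 in the interval (1, 2). -/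
theorem stmt_5 (k : ℕ) (hk : 2 ≤ k) (F : ℤ → ℤ)
    (h0 : ∀ i : ℤ, 2 - (k : ℤ) ≤ i → i ≤ 0 → F i = 0)
    (h1 : F 1 = 1)
    (hrec : ∀ n : ℤ, 2 - (k : ℤ) ≤ n →
      F (n + k) = ∑ i ∈ Finset.range k, F (n + i))
    (α : ℝ) (hα : α ∈ Set.Ioo (1 : ℝ) 2)
    (hroot : α ^ k = ∑ i ∈ Finset.range k, α ^ i)
    (n : ℕ) (hn : 1 ≤ n) :
    α ^ ((n : ℤ) - 2) ≤ (F n : ℝ) ∧ (F n : ℝ) ≤ α ^ ((n : ℤ) - 1) := by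
  obtain ⟨hα1, hα2⟩ := hα
  have hα0 : (0:ℝ) < α := lt_trans one_pos hα1
  have hαne : α ≠ 0 := ne_of_gt hα0
  -- zpow version of the root identity
  have hz : ∀ m : ℤ, α ^ (m + (k:ℤ)) = ∑ i ∈ Finset.range k, α ^ (m + (i:ℤ)) := by
    intro m
    rw [zpow_add₀ hαne, zpow_natCast, hroot, Finset.mul_sum]
    refine Finset.sum_congr rfl fun i _ => ?_
    rw [← zpow_natCast α i, ← zpow_add₀ hαne]
  -- restated recurrence
  have hrec' : ∀ m : ℤ, 2 ≤ m → F m = ∑ i ∈ Finset.range k, F (m - k + i) := by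
    intro m hm
    have h := hrec (m - k) (by omega)
    rw [show m - (k:ℤ) + k = m by ring] at h
    exact h
  -- F 2 = 1
  have hF2 : F 2 = 1 := by
    have h := hrec' 2 le_rfl
    have hk1 : k - 1 + 1 = k := by omega
    rw [← hk1, Finset.sum_range_succ] at h
    simp only [hk1] at h
    have hlast : (2:ℤ) - k + (↑(k-1):ℤ) = 1 := by
      have : ((k-1:ℕ):ℤ) = (k:ℤ) - 1 := by omega
      rw [this]; ring
    rw [hlast, h1] at h
    have hzero : ∑ i ∈ Finset.range (k-1), F (2 - k + i) = 0 := by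
      refine Finset.sum_eq_zero fun i hi => ?_
      have hik : (i:ℤ) ≤ (k:ℤ) - 2 := by
        have := Finset.mem_range.mp hi; omega
      exact h0 _ (by omega) (by omega)
    rw [hzero] at h
    omega
  -- doubling lemma
  have hdouble : ∀ m : ℤ, 3 ≤ m → m ≤ (k:ℤ) + 1 → F m = 2 * F (m - 1) := by
    intro m h3 hk1
    have e1 := hrec' m (by omega)
    have e2 := hrec' (m-1) (by omega)
    set g : ℕ → ℤ := fun i => F (m - 1 - k + i) with hg
    have e3 : ∀ i : ℕ, F (m - k + i) = g (i+1) := by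
      intro i; simp only [hg]; congr 1; push_cast; ring
    have e4 : ∑ i ∈ Finset.range (k+1), g i = ∑ i ∈ Finset.range k, g (i+1) + g 0 :=
      Finset.sum_range_succ' g k
    have e5 : ∑ i ∈ Finset.range (k+1), g i = ∑ i ∈ Finset.range k, g i + g k :=
      Finset.sum_range_succ g k
    have e6 : g 0 = 0 := by
      simp only [hg]
      exact h0 _ (by push_cast; omega) (by push_cast; omega)
    have e7 : g k = F (m - 1) := by
      simp only [hg]; congr 1; ring
    have e8 : ∑ i ∈ Finset.range k, F (m - k + i) = ∑ i ∈ Finset.range k, g (i+1) :=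
      Finset.sum_congr rfl fun i _ => e3 i
    rw [e8] at e1
    linarith [e1, e2, e4, e5, e6, e7]
  -- explicit small values
  have hpow : ∀ m : ℕ, 2 ≤ m → m ≤ k → F m = 2^(m-2) := by
    intro m
    induction m with
    | zero => omega
    | succ m ihm =>
      intro h2 hkm
      rcases Nat.lt_or_ge m 2 with hm2 | hm2
      · have : m + 1 = 2 := by omega
        rw [this]; simpa using hF2
      · have hd := hdouble ((m:ℤ)+1) (by omega) (by push_cast; omega)
        have hF : F m = 2^(m-2) := ihm hm2 (by omega)
        have hcast : ((m+1:ℕ):ℤ) = (m:ℤ) + 1 := by push_cast; ring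
        rw [hcast, hd]
        rw [show (m:ℤ) + 1 - 1 = (m:ℤ) by ring, hF]
        rw [show m + 1 - 2 = (m - 2) + 1 by omega]
        ring
  -- main strong induction
  suffices H : ∀ n : ℕ, 1 ≤ n →
      α ^ ((n : ℤ) - 2) ≤ (F n : ℝ) ∧ (F n : ℝ) ≤ α ^ ((n : ℤ) - 1) from H n hn
  clear hn n
  intro n
  induction n using Nat.strong_induction_on with
  | _ n ih =>
  intro hn
  rcases eq_or_lt_of_le hn with hone | h2
  · -- n = 1
    rw [← hone]
    push_cast
    rw [h1]
    constructor
    · have : α ^ ((1:ℤ) - 2) ≤ α ^ (0:ℤ) := zpow_le_zpow_right₀ hα1.le (by norm_num)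
      simpa using this
    · norm_num
  · have hn2 : 2 ≤ n := h2
    have hFn : F (n:ℤ) = ∑ i ∈ Finset.range k, F ((n:ℤ) - k + i) :=
      hrec' n (by exact_mod_cast hn2)
    -- a generic term bound, used in both directions
    have hub : (F n : ℝ) ≤ α ^ ((n:ℤ) - 1) := by
      have hsum : α ^ ((n:ℤ) - 1) = ∑ i ∈ Finset.range k, α ^ ((n:ℤ) - k + i - 1) := by
        have h := hz ((n:ℤ) - 1 - k)
        rw [show (n:ℤ) - 1 - k + k = (n:ℤ) - 1 by ring] at h
        rw [h]
        exact Finset.sum_congr rfl fun i _ => by rw [show (n:ℤ) - 1 - k + i = (n:ℤ) - k + i - 1 by ring]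
      rw [hFn, hsum]
      push_cast
      apply Finset.sum_le_sum
      intro i hi
      have hik : (i:ℤ) < k := by exact_mod_cast Finset.mem_range.mp hi
      by_cases hm0 : (n:ℤ) - k + i ≤ 0
      · rw [h0 _ (by omega) hm0]
        have := zpow_pos hα0 ((n:ℤ) - k + i - 1)
        simpa using this.le
      · push_neg at hm0
        set m : ℤ := (n:ℤ) - k + i with hm
        have hcast : ((m.toNat : ℕ) : ℤ) = m := Int.toNat_of_nonneg (by omega)
        have hlt : m.toNat < n := by omega
        have h1m : 1 ≤ m.toNat := by omega
        have := (ih m.toNat hlt h1m).2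
        rw [hcast] at this
        exact this
    refine ⟨?_, hub⟩
    by_cases hnk : n ≤ k
    · -- small case: F n = 2^(n-2)
      have hFval : F n = 2^(n-2) := hpow n hn2 hnk
      rw [hFval]
      have hexp : (n:ℤ) - 2 = ((n - 2 : ℕ) : ℤ) := by omega
      rw [hexp, zpow_natCast]
      push_cast
      exact pow_le_pow_left₀ hα0.le hα2.le _
    · -- large case: use the recurrence, all indices positive
      push_neg at hnk
      have hsum : α ^ ((n:ℤ) - 2) = ∑ i ∈ Finset.range k, α ^ ((n:ℤ) - k + i - 2) := by
        have h := hz ((n:ℤ) - 2 - k)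
        rw [show (n:ℤ) - 2 - k + k = (n:ℤ) - 2 by ring] at h
        rw [h]
        exact Finset.sum_congr rfl fun i _ => by rw [show (n:ℤ) - 2 - k + i = (n:ℤ) - k + i - 2 by ring]
      rw [hFn, hsum]
      push_cast
      apply Finset.sum_le_sum
      intro i hi
      have hik : (i:ℤ) < k := by exact_mod_cast Finset.mem_range.mp hi
      set m : ℤ := (n:ℤ) - k + i with hm
      have hm1 : 1 ≤ m := by omega
      have hcast : ((m.toNat : ℕ) : ℤ) = m := Int.toNat_of_nonneg (by omega)
      have hlt : m.toNat < n := by omega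
      have h1m : 1 ≤ m.toNat := by omega
      have := (ih m.toNat hlt h1m).1
      rw [hcast] at this
      exact this
end

section
/- Let k ≥ 2 and let α be the unique root of x^k − x^{k−1} − ⋯ − x − 1 in (2(1 − 2^{−k}), 2). Then for every integer n with 1 ≤ n − 1 < 2^{k/2}, we have |α^{n−1} − 2^{n−1}| < 2^n / 2^{k/2}. -/
theorem stmt_8 (k : ℕ) (hk : 2 ≤ k) (α : ℝ)
    (hα : α ∈ Set.Ioo (2 * (1 - 2 ^ (-(k : ℤ))) : ℝ) 2)
    (hroot : α ^ k = ∑ i ∈ Finset.range k, α ^ i)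
    (n : ℕ) (hn : 1 ≤ n - 1) (hn2 : ((n : ℝ) - 1) < 2 ^ ((k : ℝ) / 2)) :
    |α ^ (n - 1) - 2 ^ (n - 1)| < 2 ^ n / 2 ^ ((k : ℝ) / 2) := by
  obtain ⟨hα1, hα2⟩ := hα
  set m := n - 1 with hm
  have hnm : n = m + 1 := by omega
  have hmr : (m : ℝ) = (n : ℝ) - 1 := by
    have : (n : ℝ) = (m : ℝ) + 1 := by exact_mod_cast congrArg (Nat.cast : ℕ → ℝ) hnm
    linarith
  -- basic facts
  have hzpow : (2:ℝ) ^ (-(k : ℤ)) = ((2:ℝ) ^ k)⁻¹ := by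
    rw [zpow_neg, zpow_natCast]
  have hk4 : (4:ℝ) ≤ 2 ^ k := by
    calc (4:ℝ) = 2 ^ 2 := by norm_num
    _ ≤ 2 ^ k := by exact pow_le_pow_right₀ (by norm_num) hk
  have h2k0 : (0:ℝ) < 2 ^ k := by positivity
  have hgap : 2 - α < 2 / 2 ^ k := by
    rw [hzpow] at hα1
    have : 2 * (1 - ((2:ℝ)^k)⁻¹) = 2 - 2 / 2^k := by field_simp
    linarith [this ▸ hα1]
  have hα0 : 0 < α := by
    have h1 : 2 / (2:ℝ)^k ≤ 1/2 := by
      rw [div_le_div_iff₀ h2k0 (by norm_num)]; linarith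
    linarith
  set c : ℝ := 2 ^ ((k : ℝ) / 2) with hc
  have hc0 : 0 < c := Real.rpow_pos_of_pos (by norm_num) _
  have hcc : c * c = 2 ^ k := by
    rw [hc, ← Real.rpow_add (by norm_num), ← Real.rpow_natCast 2 k]
    norm_num
  -- geometric sum factorization
  have key : (∑ i ∈ Finset.range m, (2:ℝ) ^ i * α ^ (m - 1 - i)) * (2 - α)
      = 2 ^ m - α ^ m := geom_sum₂_mul 2 α m
  set S := ∑ i ∈ Finset.range m, (2:ℝ) ^ i * α ^ (m - 1 - i) with hS
  have hS0 : 0 ≤ S := Finset.sum_nonneg fun i _ => by positivity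
  have hSle : S ≤ (m : ℝ) * 2 ^ (m - 1) := by
    calc S ≤ ∑ _i ∈ Finset.range m, (2:ℝ) ^ (m - 1) := by
          apply Finset.sum_le_sum
          intro i hi
          have hi' : i < m := Finset.mem_range.mp hi
          have h1 : (2:ℝ) ^ i * α ^ (m - 1 - i) ≤ 2 ^ i * 2 ^ (m - 1 - i) := by
            have := pow_le_pow_left₀ hα0.le hα2.le (m - 1 - i)
            nlinarith [pow_pos (show (0:ℝ)<2 by norm_num) i]
          have h2 : (2:ℝ) ^ i * 2 ^ (m - 1 - i) = 2 ^ (m - 1) := by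
            rw [← pow_add]
            congr 1
            omega
          linarith
      _ = (m : ℝ) * 2 ^ (m - 1) := by
          rw [Finset.sum_const, Finset.card_range, nsmul_eq_mul]
  have hαm : α ^ m < 2 ^ m := by
    exact pow_lt_pow_left₀ hα2 hα0.le (by omega)
  have habs : |α ^ m - 2 ^ m| = 2 ^ m - α ^ m := by
    rw [abs_sub_comm, abs_of_nonneg (by linarith)]
  rw [habs, hnm]
  have hp : (0:ℝ) < 2 ^ (m - 1) := by positivity
  have hmm : (2:ℝ) ^ m = 2 * 2 ^ (m - 1) := by
    rw [← pow_succ']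
    congr 1
    omega
  have h2n : (2:ℝ) ^ (m + 1) = 4 * 2 ^ (m - 1) := by
    rw [pow_succ, hmm]; ring
  rw [h2n, lt_div_iff₀ hc0]
  -- now: 2^m - α^m < 4 * 2^(m-1) / c, i.e. (2^m - α^m) * c < 4 * 2^(m-1)
  have hm2 : (m : ℝ) < c := by rw [hmr]; exact hn2
  have hgap0 : 0 ≤ 2 - α := by linarith
  have step1 : 2 ^ m - α ^ m ≤ (m : ℝ) * 2 ^ (m - 1) * (2 - α) := by
    rw [← key]
    exact mul_le_mul_of_nonneg_right hSle hgap0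
  have hm0 : (0:ℝ) ≤ (m : ℝ) := Nat.cast_nonneg m
  have step2 : (m : ℝ) * 2 ^ (m - 1) * (2 - α) < c * 2 ^ (m - 1) * (2 / 2 ^ k) := by
    have hgap2 : 0 < 2 / (2:ℝ) ^ k := by positivity
    apply mul_lt_mul' (by nlinarith) hgap (by linarith) (by positivity)
  have step3 : c * 2 ^ (m - 1) * (2 / 2 ^ k) * c = 2 * 2 ^ (m - 1) := by
    rw [← hcc]; field_simp
  nlinarith [mul_le_mul_of_nonneg_right step1 hc0.le,
    mul_lt_mul_of_pos_right step2 hc0]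
end

section
/- Let k ≥ 2 and define f(x) = (x − 1)/(2 + (k + 1)(x − 2)) for x in [α, 2], where α is the dominant root of x^k − x^{k−1} − ⋯ − x − 1 with 2(1 − 2^{−k}) < α < 2. Then |f(α) − f(2)| < 2k / 2^k. -/
lemma aux_pow_9 (k : ℕ) (hk : 2 ≤ k) : (4:ℝ) * (k + 1) ≤ 3 * 2 ^ k := by
  induction k, hk using Nat.le_induction with
  | base => norm_num
  | succ n hn ih =>
    have h1 : (2:ℝ) ≤ n := by exact_mod_cast hn
    push_cast
    push_cast at ih
    have hs : (2:ℝ) ^ (n+1) = 2 * 2 ^ n := pow_succ' 2 n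
    nlinarith [pow_pos (by norm_num : (0:ℝ) < 2) n]

theorem stmt_9 (k : ℕ) (hk : 2 ≤ k) (α : ℝ)
    (hα : α ∈ Set.Ioo (2 * (1 - 2 ^ (-(k : ℤ))) : ℝ) 2)
    (hroot : α ^ k = ∑ i ∈ Finset.range k, α ^ i)
    (f : ℝ → ℝ) (hf : ∀ x, f x = (x - 1) / (2 + (k + 1) * (x - 2))) :
    |f α - f 2| < 2 * k / 2 ^ k := by
  obtain ⟨h1, h2⟩ := hα
  have hpk : (0:ℝ) < 2 ^ k := by positivity
  have hz : (2:ℝ) ^ (-(k:ℤ)) = ((2:ℝ) ^ k)⁻¹ := by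
    rw [zpow_neg, zpow_natCast]
  rw [hz] at h1
  have hinv : (0:ℝ) < ((2:ℝ) ^ k)⁻¹ := by positivity
  have hmul : (2:ℝ) ^ k * ((2:ℝ) ^ k)⁻¹ = 1 := mul_inv_cancel₀ (ne_of_gt hpk)
  have hkk : (2:ℝ) ≤ k := by exact_mod_cast hk
  have haux := aux_pow_9 k hk
  set d : ℝ := 2 + (k + 1) * (α - 2) with hd
  have hdge : (1:ℝ)/2 ≤ d := by
    have hα' : 2 - 2 * ((2:ℝ) ^ k)⁻¹ < α := by linarith
    nlinarith [hinv, hmul]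
  have hdpos : 0 < d := by linarith
  have hdne : d ≠ 0 := ne_of_gt hdpos
  have hfa : f α = (α - 1) / d := by rw [hf α]
  have hf2 : f 2 = 1 / 2 := by rw [hf 2]; norm_num
  have heq : f α - f 2 = (2 - α) * ((k:ℝ) - 1) / (2 * d) := by
    rw [hfa, hf2]
    field_simp
    ring
  rw [heq]
  have hnum0 : 0 ≤ (2 - α) * ((k:ℝ) - 1) := by nlinarith
  rw [abs_of_nonneg (by positivity)]
  have hle : (2 - α) * ((k:ℝ) - 1) / (2 * d) ≤ (2 - α) * ((k:ℝ) - 1) := by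
    rw [div_le_iff₀ (by linarith)]
    nlinarith
  have hlt : (2 - α) * ((k:ℝ) - 1) < 2 * k * ((2:ℝ) ^ k)⁻¹ := by
    have h2α : 2 - α < 2 * ((2:ℝ) ^ k)⁻¹ := by linarith
    nlinarith [hinv]
  have : 2 * (k:ℝ) / 2 ^ k = 2 * k * ((2:ℝ) ^ k)⁻¹ := by ring
  rw [this]
  linarith
end

section
/- If m ≥ 10 and k ≥ 6 are integers and |1 − m·2^{−(n−m−2)}| < 3.2/2^{k/2} for some integer n, then ⌊log m / log 2⌋ + m + 2 ≤ n ≤ ⌊log m / log 2⌋ + m + 3. -/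
theorem stmt_11 (m k n : ℤ) (hm : 10 ≤ m) (hk : 6 ≤ k)
    (h : |1 - (m : ℝ) * 2 ^ (-(n - m - 2))| < 3.2 / 2 ^ ((k : ℝ) / 2)) :
    ⌊Real.log m / Real.log 2⌋ + m + 2 ≤ n ∧ n ≤ ⌊Real.log m / Real.log 2⌋ + m + 3 := by
  set t : ℤ := n - m - 2 with ht
  have hbound : (3.2 : ℝ) / 2 ^ ((k : ℝ) / 2) ≤ 0.4 := by
    have hk' : (3 : ℝ) ≤ (k : ℝ) / 2 := by
      have : (6 : ℝ) ≤ (k : ℝ) := by exact_mod_cast hk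
      linarith
    have h8 : (8 : ℝ) ≤ 2 ^ ((k : ℝ) / 2) := by
      calc (8 : ℝ) = 2 ^ (3 : ℝ) := by norm_num [Real.rpow_natCast]
        _ ≤ 2 ^ ((k : ℝ) / 2) := Real.rpow_le_rpow_left_iff (by norm_num) |>.mpr hk'
    rw [div_le_iff₀ (by positivity)]
    linarith
  have habs : |1 - (m : ℝ) * 2 ^ (-t)| < 0.4 := lt_of_lt_of_le h hbound
  rw [abs_lt] at habs
  have hpt : (0 : ℝ) < (2 : ℝ) ^ t := by positivity
  have hzn : (2 : ℝ) ^ (-t) = ((2 : ℝ) ^ t)⁻¹ := zpow_neg 2 t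
  have hlow : (0.6 : ℝ) * 2 ^ t < (m : ℝ) := by
    have h2 := habs.2
    rw [hzn, ← div_eq_mul_inv] at h2
    have : (0.6 : ℝ) < (m : ℝ) / 2 ^ t := by linarith
    calc (0.6 : ℝ) * 2 ^ t < ((m : ℝ) / 2 ^ t) * 2 ^ t := by
          exact mul_lt_mul_of_pos_right this hpt
      _ = (m : ℝ) := div_mul_cancel₀ _ (ne_of_gt hpt)
  have hhigh : (m : ℝ) < 1.4 * 2 ^ t := by
    have h2 := habs.1
    rw [hzn, ← div_eq_mul_inv] at h2
    have : (m : ℝ) / 2 ^ t < 1.4 := by linarith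
    calc (m : ℝ) = ((m : ℝ) / 2 ^ t) * 2 ^ t := (div_mul_cancel₀ _ (ne_of_gt hpt)).symm
      _ < 1.4 * 2 ^ t := mul_lt_mul_of_pos_right this hpt
  -- floor of logb
  have hm0 : (0 : ℝ) ≤ (m : ℝ) := by exact_mod_cast (by linarith : (0:ℤ) ≤ m)
  have hfl : ⌊Real.log m / Real.log 2⌋ = Int.log 2 (m : ℝ) := by
    rw [show Real.log m / Real.log 2 = Real.logb 2 (m : ℝ) from rfl]
    exact_mod_cast Real.floor_logb_natCast (b := 2) hm0
  set L : ℤ := Int.log 2 (m : ℝ) with hL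
  have hmL : (2 : ℝ) ^ L ≤ (m : ℝ) := Int.zpow_log_le_self (by norm_num) (by exact_mod_cast (by linarith : (0:ℤ) < m))
  have hmL2 : (m : ℝ) < (2 : ℝ) ^ (L + 1) := Int.lt_zpow_succ_log_self (by norm_num) _
  have hone : (1 : ℝ) < 2 := one_lt_two
  have h1 : L ≤ t := by
    have : (2 : ℝ) ^ L < (2 : ℝ) ^ (t + 1) := by
      rw [zpow_add_one₀ (by norm_num)]
      calc (2:ℝ)^L ≤ (m:ℝ) := hmL
        _ < 1.4 * 2 ^ t := hhigh
        _ ≤ 2 ^ t * 2 := by nlinarith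
    have := (zpow_lt_zpow_iff_right₀ hone).mp this
    omega
  have h2 : t ≤ L + 1 := by
    have : (2 : ℝ) ^ t < (2 : ℝ) ^ (L + 2) := by
      have h6 : (0.6 : ℝ) * 2 ^ t < 2 ^ (L + 1) := lt_trans hlow hmL2
      have : (2:ℝ) ^ (L + 2) = 2 ^ (L+1) * 2 := by
        rw [show L + 2 = L + 1 + 1 by ring, zpow_add_one₀ (by norm_num : (2:ℝ) ≠ 0)]
      nlinarith [h6]
    have := (zpow_lt_zpow_iff_right₀ hone).mp this
    omega
  rw [hfl]
  constructor <;> omega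
end
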